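/- Let Td ∈ ℝ^{n×n} be a tridiagonal matrix whose first principal diagonals are non-singular, and let p(x) = det(x·Id_n − Td) be its characteristic polynomial. Then there exists an invertible lower triangular matrix L ∈ ℝ^{n×n} with Td = L·C_p^T·L^{−1}; moreover, L is unique up to multiplication by a nonzero real scalar: if L_1, L_2 are invertible lower triangular with L_1·C_p^T·L_1^{−1} = L_2·C_p^T·L_2^{−1} = Td, then L_1 = λ·L_2 for some nonzero λ ∈ ℝ. -/

import Mathlib

open Polynomial Matrix

/-- The companion matrix of `p(x) = x^n + a_{n-1}x^{n-1} + ⋯ + a_0`: 1's on the first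
subdiagonal, last column `(−a_0, …, −a_{n-1})ᵀ`, zeros elsewhere. -/
def companion (n : ℕ) (p : Polynomial ℝ) : Matrix (Fin n) (Fin n) ℝ :=
  Matrix.of fun i j =>
    if (j : ℕ) = n - 1 then -p.coeff (i : ℕ)
    else if (i : ℕ) = (j : ℕ) + 1 then 1
    else 0

lemma tri_pow_zero {n : ℕ} (Td : Matrix (Fin n) (Fin n) ℝ)
    (htri : ∀ i j : Fin n, ((i : ℕ) + 2 ≤ (j : ℕ) ∨ (j : ℕ) + 2 ≤ (i : ℕ)) → Td i j = 0) :
    ∀ (m : ℕ) (i j : Fin n), (i : ℕ) + m < (j : ℕ) → (Td ^ m) i j = 0 := by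
  intro m
  induction m with
  | zero =>
    intro i j h
    rw [pow_zero, Matrix.one_apply_ne (Fin.ne_of_val_ne (by omega))]
  | succ m ih =>
    intro i j h
    rw [pow_succ, Matrix.mul_apply]
    apply Finset.sum_eq_zero
    intro k _
    by_cases hk : (i : ℕ) + m < (k : ℕ)
    · rw [ih i k hk, zero_mul]
    · rw [htri k j (Or.inl (by omega)), mul_zero]

lemma tri_pow_diag {n : ℕ} (Td : Matrix (Fin n) (Fin n) ℝ)
    (htri : ∀ i j : Fin n, ((i : ℕ) + 2 ≤ (j : ℕ) ∨ (j : ℕ) + 2 ≤ (i : ℕ)) → Td i j = 0)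
    (hsup : ∀ i j : Fin n, (j : ℕ) = (i : ℕ) + 1 → Td i j ≠ 0) :
    ∀ (m : ℕ) (i j : Fin n), (j : ℕ) = (i : ℕ) + m → (Td ^ m) i j ≠ 0 := by
  intro m
  induction m with
  | zero =>
    intro i j h
    have hji : j = i := Fin.ext (by omega)
    subst hji
    rw [pow_zero, Matrix.one_apply_eq]
    exact one_ne_zero
  | succ m ih =>
    intro i j h
    have hk : (i : ℕ) + m < n := by omega
    set k : Fin n := ⟨(i : ℕ) + m, hk⟩ with hkdef
    rw [pow_succ, Matrix.mul_apply, Finset.sum_eq_single k]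
    · exact mul_ne_zero (ih i k rfl) (hsup k j (by simp [hkdef]; omega))
    · intro b _ hb
      by_cases hb' : (i : ℕ) + m < (b : ℕ)
      · rw [tri_pow_zero Td htri m i b hb', zero_mul]
      · have : (b : ℕ) < (i : ℕ) + m := by
          rcases lt_or_eq_of_le (not_lt.mp hb') with h' | h'
          · exact h'
          · exact absurd (Fin.ext (h' : (b:ℕ) = (k:ℕ)) : b = k) hb
        rw [htri b j (Or.inl (by omega)), mul_zero]
    · intro h; exact absurd (Finset.mem_univ k) h

theorem stmt_6 (n : ℕ) (Td : Matrix (Fin n) (Fin n) ℝ)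
    (htri : ∀ i j : Fin n, ((i : ℕ) + 2 ≤ (j : ℕ) ∨ (j : ℕ) + 2 ≤ (i : ℕ)) → Td i j = 0)
    (hsub : ∀ i j : Fin n, (i : ℕ) = (j : ℕ) + 1 → Td i j ≠ 0)
    (hsup : ∀ i j : Fin n, (j : ℕ) = (i : ℕ) + 1 → Td i j ≠ 0)
    (p : Polynomial ℝ) (hp : p = Td.charpoly) :
    (∃ L : Matrix (Fin n) (Fin n) ℝ, IsUnit L ∧ (∀ i j : Fin n, i < j → L i j = 0) ∧
        Td = L * (companion n p)ᵀ * L⁻¹) ∧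
      ∀ L₁ L₂ : Matrix (Fin n) (Fin n) ℝ,
        IsUnit L₁ → (∀ i j : Fin n, i < j → L₁ i j = 0) →
          Td = L₁ * (companion n p)ᵀ * L₁⁻¹ →
        IsUnit L₂ → (∀ i j : Fin n, i < j → L₂ i j = 0) →
          Td = L₂ * (companion n p)ᵀ * L₂⁻¹ →
        ∃ lam : ℝ, lam ≠ 0 ∧ L₁ = lam • L₂ := by
  rcases Nat.eq_zero_or_pos n with hn | hn
  · subst hn
    constructor
    · exact ⟨1, isUnit_one, fun i _ _ => i.elim0, by ext i j; exact i.elim0⟩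
    · intro L₁ L₂ _ _ _ _ _ _
      exact ⟨1, one_ne_zero, by ext i j; exact i.elim0⟩
  subst hp
  set Cp : Matrix (Fin n) (Fin n) ℝ := (companion n Td.charpoly)ᵀ with hCpdef
  have hCapp : ∀ i j : Fin n, Cp i j = if (i : ℕ) = n - 1 then -Td.charpoly.coeff (j : ℕ)
      else if (j : ℕ) = (i : ℕ) + 1 then 1 else 0 := fun i j => rfl
  set M : Matrix (Fin n) (Fin n) ℝ :=
    Matrix.of (fun i j => (Td ^ (i : ℕ)) ⟨0, hn⟩ j) with hMdef
  have hMapp : ∀ i j : Fin n, M i j = (Td ^ (i : ℕ)) ⟨0, hn⟩ j := fun i j => rfl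
  have hMlow : ∀ i j : Fin n, i < j → M i j = 0 := fun i j h =>
    tri_pow_zero Td htri (i : ℕ) ⟨0, hn⟩ j
      (by have h' : (i : ℕ) < (j : ℕ) := h; show 0 + (i : ℕ) < (j : ℕ); omega)
  have hMdiag : ∀ i : Fin n, M i i ≠ 0 := fun i =>
    tri_pow_diag Td htri hsup (i : ℕ) ⟨0, hn⟩ i (by show (i : ℕ) = 0 + (i : ℕ); omega)
  have hMbt : M.BlockTriangular OrderDual.toDual := fun i j h =>
    hMlow i j (OrderDual.toDual_lt_toDual.mp h)
  have hdet : IsUnit M.det := by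
    rw [Matrix.det_of_lowerTriangular M hMbt]
    exact isUnit_iff_ne_zero.2 (Finset.prod_ne_zero_iff.2 fun i _ => hMdiag i)
  have hMunit : IsUnit M := (Matrix.isUnit_iff_isUnit_det M).2 hdet
  haveI : Invertible M := M.invertibleOfIsUnitDet hdet
  have key : M * Td = Cp * M := by
    ext i j
    have hL : ∑ k, M i k * Td k j = (Td ^ ((i : ℕ) + 1)) ⟨0, hn⟩ j := by
      rw [pow_succ, Matrix.mul_apply]
      rfl
    rw [Matrix.mul_apply, Matrix.mul_apply]
    by_cases hi : (i : ℕ) = n - 1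
    · have hin : (i : ℕ) + 1 = n := by have := i.isLt; omega
      have hCH := Matrix.aeval_self_charpoly Td
      rw [Polynomial.aeval_eq_sum_range] at hCH
      have hdeg : Td.charpoly.natDegree = n := by
        rw [Matrix.charpoly_natDegree_eq_dim, Fintype.card_fin]
      rw [hdeg, Finset.sum_range_succ] at hCH
      have hcn : Td.charpoly.coeff n = 1 := by
        have := (Matrix.charpoly_monic Td).coeff_natDegree
        rwa [hdeg] at this
      rw [hcn, one_smul] at hCH
      have h0 : (∑ k ∈ Finset.range n, Td.charpoly.coeff k • Td ^ k + Td ^ n) ⟨0, hn⟩ j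
          = 0 := by rw [hCH]; rfl
      rw [Matrix.add_apply, Matrix.sum_apply] at h0
      simp only [Matrix.smul_apply, smul_eq_mul] at h0
      have hpow : (Td ^ n) ⟨0, hn⟩ j
          = ∑ k ∈ Finset.range n, -Td.charpoly.coeff k * (Td ^ k) ⟨0, hn⟩ j := by
        have h1 : (Td ^ n) ⟨0, hn⟩ j
            = -(∑ k ∈ Finset.range n, Td.charpoly.coeff k * (Td ^ k) ⟨0, hn⟩ j) := by
          linarith
        rw [h1, ← Finset.sum_neg_distrib]
        exact Finset.sum_congr rfl fun k _ => (neg_mul _ _).symm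
      have hR : ∑ k, Cp i k * M k j
          = ∑ k : Fin n, -Td.charpoly.coeff (k : ℕ) * (Td ^ (k : ℕ)) ⟨0, hn⟩ j := by
        refine Finset.sum_congr rfl fun k _ => ?_
        rw [hCapp, if_pos hi, hMapp]
      calc ∑ k, M i k * Td k j = (Td ^ ((i : ℕ) + 1)) ⟨0, hn⟩ j := hL
        _ = (Td ^ n) ⟨0, hn⟩ j := by rw [hin]
        _ = ∑ k ∈ Finset.range n, -Td.charpoly.coeff k * (Td ^ k) ⟨0, hn⟩ j := hpow
        _ = ∑ k : Fin n, -Td.charpoly.coeff (k : ℕ) * (Td ^ (k : ℕ)) ⟨0, hn⟩ j :=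
          (Fin.sum_univ_eq_sum_range _ n).symm
        _ = ∑ k, Cp i k * M k j := hR.symm
    · have hi1 : (i : ℕ) + 1 < n := by have := i.isLt; omega
      have hRs : ∑ k, Cp i k * M k j = (Td ^ ((i : ℕ) + 1)) ⟨0, hn⟩ j := by
        rw [Finset.sum_eq_single (⟨(i : ℕ) + 1, hi1⟩ : Fin n)]
        · rw [hCapp, hMapp, if_neg hi, if_pos rfl, one_mul]
        · intro b _ hb
          rw [hCapp, if_neg hi, if_neg (fun hbv => hb (Fin.ext hbv)), zero_mul]
        · intro h; exact absurd (Finset.mem_univ _) h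
      rw [hL, hRs]
  constructor
  · refine ⟨M⁻¹, Matrix.isUnit_nonsing_inv_iff.2 hMunit, fun i j h =>
      Matrix.blockTriangular_inv_of_blockTriangular hMbt
        (OrderDual.toDual_lt_toDual.mpr h), ?_⟩
    rw [Matrix.nonsing_inv_nonsing_inv M hdet]
    calc Td = M⁻¹ * (M * Td) := (Matrix.nonsing_inv_mul_cancel_left M Td hdet).symm
      _ = M⁻¹ * (Cp * M) := by rw [key]
      _ = M⁻¹ * Cp * M := by rw [mul_assoc]
  · intro L₁ L₂ h1u h1l h1e h2u h2l h2e
    have h1d : IsUnit L₁.det := (Matrix.isUnit_iff_isUnit_det L₁).1 h1u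
    have h2d : IsUnit L₂.det := (Matrix.isUnit_iff_isUnit_det L₂).1 h2u
    haveI : Invertible L₂ := L₂.invertibleOfIsUnitDet h2d
    have e1 : Td * L₁ = L₁ * Cp := by
      rw [h1e, mul_assoc, Matrix.nonsing_inv_mul _ h1d, mul_one]
    have e2 : Td * L₂ = L₂ * Cp := by
      rw [h2e, mul_assoc, Matrix.nonsing_inv_mul _ h2d, mul_one]
    have e2' : Cp * L₂⁻¹ = L₂⁻¹ * Td := by
      calc Cp * L₂⁻¹ = L₂⁻¹ * (L₂ * Cp) * L₂⁻¹ := by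
            rw [Matrix.nonsing_inv_mul_cancel_left _ _ h2d]
        _ = L₂⁻¹ * (Td * L₂) * L₂⁻¹ := by rw [e2]
        _ = L₂⁻¹ * Td * (L₂ * L₂⁻¹) := by simp only [mul_assoc]
        _ = L₂⁻¹ * Td := by rw [Matrix.mul_nonsing_inv _ h2d, mul_one]
    have hcomm : (L₂⁻¹ * L₁) * Cp = Cp * (L₂⁻¹ * L₁) := by
      calc (L₂⁻¹ * L₁) * Cp = L₂⁻¹ * (L₁ * Cp) := by rw [mul_assoc]
        _ = L₂⁻¹ * (Td * L₁) := by rw [e1]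
        _ = (L₂⁻¹ * Td) * L₁ := by rw [mul_assoc]
        _ = (Cp * L₂⁻¹) * L₁ := by rw [e2']
        _ = Cp * (L₂⁻¹ * L₁) := by rw [mul_assoc]
    have KisUnit : IsUnit (L₂⁻¹ * L₁) := (Matrix.isUnit_nonsing_inv_iff.2 h2u).mul h1u
    have Klow : ∀ i j : Fin n, i < j → (L₂⁻¹ * L₁) i j = 0 := by
      have b2 : L₂.BlockTriangular OrderDual.toDual := fun i j h =>
        h2l i j (OrderDual.toDual_lt_toDual.mp h)
      have b1 : L₁.BlockTriangular OrderDual.toDual := fun i j h =>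
        h1l i j (OrderDual.toDual_lt_toDual.mp h)
      exact fun i j h =>
        ((Matrix.blockTriangular_inv_of_blockTriangular b2).mul b1)
          (OrderDual.toDual_lt_toDual.mpr h)
    set k : ℝ := (L₂⁻¹ * L₁) ⟨0, hn⟩ ⟨0, hn⟩ with hkdef
    have hrow : ∀ (m : ℕ) (hm : m < n) (j : Fin n),
        (L₂⁻¹ * L₁) ⟨m, hm⟩ j = if (j : ℕ) = m then k else 0 := by
      intro m
      induction m with
      | zero =>
        intro hm j
        rcases Nat.eq_zero_or_pos (j : ℕ) with hj | hj
        · have hj' : j = ⟨0, hm⟩ := Fin.ext hj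
          subst hj'
          rw [if_pos rfl]
        · rw [if_neg (by omega)]
          exact Klow ⟨0, hm⟩ j (show (0 : ℕ) < (j : ℕ) from hj)
      | succ m ih =>
        intro hm j
        have hm' : m < n := by omega
        have hlast : ¬ ((m : ℕ) = n - 1) := by omega
        have hLs : ((L₂⁻¹ * L₁) * Cp) ⟨m, hm'⟩ j = k * Cp ⟨m, hm'⟩ j := by
          rw [Matrix.mul_apply, Finset.sum_eq_single (⟨m, hm'⟩ : Fin n)]
          · rw [ih hm', if_pos rfl]
          · intro b _ hb
            rw [ih hm', if_neg (fun hbv => hb (Fin.ext hbv)), zero_mul]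
          · intro h; exact absurd (Finset.mem_univ _) h
        have hcval : k * Cp ⟨m, hm'⟩ j = if (j : ℕ) = m + 1 then k else 0 := by
          rw [hCapp, if_neg hlast]
          by_cases hj : (j : ℕ) = m + 1
          · rw [if_pos hj, if_pos hj, mul_one]
          · rw [if_neg hj, if_neg hj, mul_zero]
        have hRs : (Cp * (L₂⁻¹ * L₁)) ⟨m, hm'⟩ j = (L₂⁻¹ * L₁) ⟨m + 1, hm⟩ j := by
          rw [Matrix.mul_apply, Finset.sum_eq_single (⟨m + 1, hm⟩ : Fin n)]
          · rw [hCapp, if_neg hlast, if_pos rfl, one_mul]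
          · intro b _ hb
            rw [hCapp, if_neg hlast, if_neg (fun hbv => hb (Fin.ext hbv)), zero_mul]
          · intro h; exact absurd (Finset.mem_univ _) h
        calc (L₂⁻¹ * L₁) ⟨m + 1, hm⟩ j = (Cp * (L₂⁻¹ * L₁)) ⟨m, hm'⟩ j := hRs.symm
          _ = ((L₂⁻¹ * L₁) * Cp) ⟨m, hm'⟩ j := by rw [hcomm]
          _ = k * Cp ⟨m, hm'⟩ j := hLs
          _ = if (j : ℕ) = m + 1 then k else 0 := hcval
    have hk0 : k ≠ 0 := by
      intro h0
      have hKzero : (L₂⁻¹ * L₁) = 0 := by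
        ext i j
        have h := hrow (i : ℕ) i.isLt j
        rw [Fin.eta] at h
        rw [h, h0]
        simp
      rw [hKzero] at KisUnit
      have hd := (Matrix.isUnit_iff_isUnit_det _).1 KisUnit
      rw [@Matrix.det_zero (Fin n) _ _ _ _ ⟨(⟨0, hn⟩ : Fin n)⟩] at hd
      exact (by simp : ¬ IsUnit (0 : ℝ)) hd
    refine ⟨k, hk0, ?_⟩
    have hKeq : L₂⁻¹ * L₁ = k • (1 : Matrix (Fin n) (Fin n) ℝ) := by
      ext i j
      have h := hrow (i : ℕ) i.isLt j
      rw [Fin.eta] at h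
      rw [h, Matrix.smul_apply, Matrix.one_apply]
      by_cases hij : i = j
      · subst hij
        rw [if_pos rfl, if_pos rfl, smul_eq_mul, mul_one]
      · rw [if_neg (fun hv => hij (Fin.ext hv).symm), if_neg hij, smul_eq_mul, mul_zero]
    calc L₁ = L₂ * (L₂⁻¹ * L₁) := (Matrix.mul_nonsing_inv_cancel_left _ _ h2d).symm
      _ = L₂ * (k • 1) := by rw [hKeq]
      _ = k • L₂ := by rw [Matrix.mul_smul, mul_one]
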